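/- Let a < b < n be positive integers, t1, t2, t3 real, and suppose x ∈ ℝ and integers k1, k2 satisfy a·x − (t1+k1) = λ_x = −(b·x − (t2+k2)) with λ_x > (b−a)/(2n). Let E ≥ λ_x and set z1 = x + (n·λ_x − (b+n)·E)/(b·n), z2 = x + ((a+n)·E − n·λ_x)/(a·n). If there exists z ∈ [z1, z2] with n·z ≡ t3 (mod 1), then μ_{a,b,n}(t1,t2,t3) ≤ E. -/

import Mathlib

/-- Distance from a real number to the nearest integer. -/
noncomputable def dni (u : ℝ) : ℝ := |u - round u|

/-- Approximation cost of `(t1, t2)` relative to the two-element set `{a, b}`. -/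
noncomputable def mu2 (a b : ℕ) (t1 t2 : ℝ) : ℝ :=
  ⨅ x : ℝ, max (dni (t1 - x * a)) (dni (t2 - x * b))

/-- Approximation cost of `(t1, t2, t3)` relative to the set `{a, b, n}`. -/
noncomputable def mu3 (a b n : ℕ) (t1 t2 t3 : ℝ) : ℝ :=
  ⨅ x : ℝ, max (dni (t1 - x * a)) (max (dni (t2 - x * b)) (dni (t3 - x * n)))

/-- Angular Kronecker constant of `{a, b, n}`. -/
noncomputable def alpha3 (a b n : ℕ) : ℝ :=
  sSup {v : ℝ | ∃ t1 t2 t3 : ℝ, v = mu3 a b n t1 t2 t3}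

/-- Binary Kronecker constant of `{a, b, n}`. -/
noncomputable def beta3 (a b n : ℕ) : ℝ :=
  sSup {v : ℝ | ∃ t1 t2 t3 : ℝ, t1 ∈ ({0, 1/2} : Set ℝ) ∧ t2 ∈ ({0, 1/2} : Set ℝ) ∧
    t3 ∈ ({0, 1/2} : Set ℝ) ∧ v = mu3 a b n t1 t2 t3}

lemma dni_nonneg (u : ℝ) : 0 ≤ dni u := abs_nonneg _

lemma dni_le_abs (u : ℝ) (m : ℤ) : dni u ≤ |u - m| := round_le u m

set_option maxHeartbeats 1000000 in
theorem stmt_5 (a b n : ℕ) (ha : 0 < a) (hab : a < b) (hbn : b < n)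
    (t1 t2 t3 : ℝ) (x lam : ℝ) (k1 k2 : ℤ)
    (hbal1 : a * x - (t1 + k1) = lam) (hbal2 : lam = -(b * x - (t2 + k2)))
    (hbig : lam > ((b : ℝ) - a) / (2 * n))
    (E : ℝ) (hE : E ≥ lam)
    (z : ℝ)
    (hz1 : x + (n * lam - (b + n) * E) / (b * n) ≤ z)
    (hz2 : z ≤ x + ((a + n) * E - n * lam) / (a * n))
    (hcong : ∃ k : ℤ, (n : ℝ) * z - t3 = k) :
    mu3 a b n t1 t2 t3 ≤ E := by
  obtain ⟨kk, hkk⟩ := hcong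
  have ha0 : (0:ℝ) < a := by exact_mod_cast ha
  have hb0 : (0:ℝ) < b := by exact_mod_cast lt_trans ha hab
  have hn0 : (0:ℝ) < n := by
    have : 0 < n := lt_trans (lt_trans ha hab) hbn
    exact_mod_cast this
  have habR : (a:ℝ) < b := by exact_mod_cast hab
  have hbnR : (b:ℝ) < n := by exact_mod_cast hbn
  have hlam : 0 < lam := lt_trans (div_pos (by linarith) (by positivity)) hbig
  have hE0 : 0 < E := lt_of_lt_of_le hlam hE
  have hbig' : (b:ℝ) - a < 2 * n * lam := by
    have h2n : (0:ℝ) < 2 * n := by linarith [hn0]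
    have := (div_lt_iff₀ h2n).mp hbig
    linarith [this]
  set A : ℝ := x + (lam - E) / b with hA
  set B : ℝ := x + (E - lam) / a with hB
  set C : ℝ := x + (lam + E) / b with hC
  have hAe : (b:ℝ) * (A - x) = lam - E := by
    rw [hA]; field_simp; ring
  have hBe : (a:ℝ) * (B - x) = E - lam := by
    rw [hB]; field_simp; ring
  have hCe : (b:ℝ) * (C - x) = lam + E := by
    rw [hC]; field_simp; ring
  clear_value A B C
  have hz1m : (n:ℝ) * lam - (b + n) * E ≤ b * n * (z - x) := by
    have h : (n * lam - (b + n) * E) / ((b:ℝ) * n) ≤ z - x := by linarith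
    rw [div_le_iff₀ (by positivity)] at h
    linarith [h]
  have hz2m : (a:ℝ) * n * (z - x) ≤ (a + n) * E - n * lam := by
    have h : z - x ≤ ((a + n) * E - (n:ℝ) * lam) / (a * n) := by linarith
    rw [le_div_iff₀ (by positivity)] at h
    linarith [h]
  have hAx : A ≤ x := by
    rw [hA]
    have h := div_nonpos_iff.mpr (Or.inr ⟨(by linarith : lam - E ≤ 0), hb0.le⟩)
    linarith [h]
  have hxB : x ≤ B := by
    rw [hB]
    have h := div_nonneg (by linarith : (0:ℝ) ≤ E - lam) ha0.le
    linarith [h]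
  have hAB : A ≤ B := le_trans hAx hxB
  have hAC : A ≤ C := by
    rw [hA, hC]
    have h := (div_le_div_iff_of_pos_right hb0).mpr (by linarith : lam - E ≤ lam + E)
    linarith [h]
  set B' : ℝ := min B C with hB'
  clear_value B'
  have hAB' : A ≤ B' := hB' ▸ le_min hAB hAC
  have hB'B : B' ≤ B := hB' ▸ min_le_left _ _
  have hB'C : B' ≤ C := hB' ▸ min_le_right _ _
  -- find the lattice point
  have hkey : ∃ k : ℤ, (n:ℝ) * (A - (z - k / n)) ≤ E ∧ (n:ℝ) * ((z - k / n) - B') ≤ E := by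
    by_cases hBC : B ≤ C
    · refine ⟨0, ?_, ?_⟩
      · push_cast
        have : (n:ℝ) * (A - (z - 0 / n)) = n * (A - z) := by ring
        rw [this]
        have hAen : (b:ℝ) * n * (A - x) = n * (lam - E) := by linear_combination (n:ℝ) * hAe
        have hh : (b:ℝ) * (n * (A - z)) ≤ b * E := by linarith [hAen, hz1m]
        exact (mul_le_mul_iff_right₀ hb0).mp hh
      · push_cast
        have hBB' : B' = B := hB' ▸ min_eq_left hBC
        have : (n:ℝ) * ((z - 0 / n) - B') = n * (z - B) := by rw [hBB']; ring
        rw [this]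
        have hBen : (a:ℝ) * n * (B - x) = n * (E - lam) := by linear_combination (n:ℝ) * hBe
        have hh : (a:ℝ) * (n * (z - B)) ≤ a * E := by linarith [hBen, hz2m]
        exact (mul_le_mul_iff_right₀ ha0).mp hh
    · push_neg at hBC
      have hB'eq : B' = C := hB' ▸ min_eq_right hBC.le
      have h1 : (a:ℝ) * (lam + E) < b * (E - lam) := by
        have u1 : (a:ℝ) * b * (C - x) < a * b * (B - x) :=
          mul_lt_mul_of_pos_left (sub_lt_sub_right hBC x) (mul_pos ha0 hb0)
        have u2 : (a:ℝ) * b * (C - x) = a * (lam + E) := by linear_combination (a:ℝ) * hCe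
        have u3 : (a:ℝ) * b * (B - x) = b * (E - lam) := by linear_combination (b:ℝ) * hBe
        linarith [u1, u2, u3]
      have h3 : ((b:ℝ) - a) * E > (a + b) * lam := by linarith [h1]
      have h7 : 2 * (n:ℝ) * E > a + b := by
        have s1 : ((b:ℝ) - a) * E < (2 * n * lam) * E := mul_lt_mul_of_pos_right hbig' hE0
        have s2 : ((a:ℝ) + b) * lam < (2 * n * E) * lam := by nlinarith [h3, s1]
        exact (mul_lt_mul_iff_left₀ hlam).mp s2
      have hCAe : (b:ℝ) * (C - A) = 2 * E := by linarith [hAe, hCe]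
      have e9 : (b:ℝ) * ((n:ℝ) * (C - A) + 2 * E) = 2 * n * E + 2 * E * b := by
        linear_combination (n:ℝ) * hCAe
      have h10 : (b:ℝ) * 1 ≤ b * ((n:ℝ) * (C - A) + 2 * E) := by
        rw [e9]; linarith [h7, mul_pos hE0 hb0, ha0]
      have hlen : 1 ≤ (n:ℝ) * (C - A) + 2 * E := (mul_le_mul_iff_right₀ hb0).mp h10
      refine ⟨⌈(n:ℝ) * (z - C) - E⌉, ?_, ?_⟩
      · have hceil : ((⌈(n:ℝ) * (z - C) - E⌉ : ℤ) : ℝ) < (n * (z - C) - E) + 1 :=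
          Int.ceil_lt_add_one _
        have hnd : (n:ℝ) * ((⌈(n:ℝ) * (z - C) - E⌉ : ℤ) / n) = (⌈(n:ℝ) * (z - C) - E⌉ : ℤ) := by
          field_simp
        linarith [hceil, hnd, hlen]
      · rw [hB'eq]
        have hceil : ((n:ℝ) * (z - C) - E) ≤ (⌈(n:ℝ) * (z - C) - E⌉ : ℤ) := Int.le_ceil _
        have hnd : (n:ℝ) * ((⌈(n:ℝ) * (z - C) - E⌉ : ℤ) / n) = (⌈(n:ℝ) * (z - C) - E⌉ : ℤ) := by
          field_simp
        linarith [hceil, hnd]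
  obtain ⟨k, hp1, hp2⟩ := hkey
  set p : ℝ := z - k / n with hp
  clear_value p
  set x' : ℝ := max A (min p B') with hx'
  clear_value x'
  have hx'A : A ≤ x' := hx' ▸ le_max_left _ _
  have hx'B' : x' ≤ B' := hx' ▸ max_le hAB' (min_le_right _ _)
  have hx'B : x' ≤ B := le_trans hx'B' hB'B
  have hx'C : x' ≤ C := le_trans hx'B' hB'C
  have hnp : (n:ℝ) * p = n * z - k := by rw [hp]; field_simp
  -- third coordinate key bound
  have hd3 : |(n:ℝ) * (p - x')| ≤ E := by
    rcases le_total p A with h | h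
    · have hpB' : p ≤ B' := le_trans h hAB'
      have hxe : x' = A := by rw [hx', min_eq_left hpB', max_eq_left h]
      rw [hxe, abs_le]
      constructor
      · linarith [hp1]
      · linarith [mul_nonneg hn0.le (sub_nonneg.mpr h), hE0.le]
    · rcases le_total p B' with h2 | h2
      · have hxe : x' = p := by rw [hx', min_eq_left h2, max_eq_right h]
        rw [hxe]; simp [hE0.le]
      · have hxe : x' = B' := by rw [hx', min_eq_right h2, max_eq_right hAB']
        rw [hxe, abs_le]
        constructor
        · linarith [mul_nonneg hn0.le (sub_nonneg.mpr h2), hE0.le]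
        · linarith [hp2]
  -- multiplied bounds on x'
  have m1 : (a:ℝ) * (x' - x) ≤ E - lam := by linarith [hBe, mul_nonneg ha0.le (sub_nonneg.mpr hx'B)]
  have m2 : lam - E ≤ (b:ℝ) * (x' - x) := by linarith [hAe, mul_nonneg hb0.le (sub_nonneg.mpr hx'A)]
  have m3 : (b:ℝ) * (x' - x) ≤ lam + E := by linarith [hCe, mul_nonneg hb0.le (sub_nonneg.mpr hx'C)]
  -- coordinate bounds
  have c1 : dni (t1 - x' * a) ≤ E := by
    refine le_trans (dni_le_abs _ (-k1)) ?_
    have e1 : t1 - x' * a - ((-k1 : ℤ) : ℝ) = a * (x - x') - lam := by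
      push_cast; linear_combination -hbal1
    rw [e1, abs_le]
    constructor
    · linarith [m1]
    · have t1 : (a:ℝ)*(lam-E) ≤ a*(b*(x'-x)) := mul_le_mul_of_nonneg_left m2 ha0.le
      have t2 : (0:ℝ) ≤ (a+b)*lam := mul_nonneg (by linarith) hlam.le
      have t3 : (0:ℝ) ≤ (b-a)*E := mul_nonneg (by linarith) hE0.le
      have h156 : (b:ℝ) * (-(lam+E)) ≤ b * (a*(x'-x)) := by linarith [t1, t2, t3]
      have := (mul_le_mul_iff_right₀ hb0).mp h156
      linarith [this]
  have c2 : dni (t2 - x' * b) ≤ E := by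
    refine le_trans (dni_le_abs _ (-k2)) ?_
    have e2 : t2 - x' * b - ((-k2 : ℤ) : ℝ) = b * (x - x') + lam := by
      push_cast; linear_combination -hbal2
    rw [e2, abs_le]
    constructor
    · linarith [m3]
    · linarith [m2]
  have c3 : dni (t3 - x' * n) ≤ E := by
    refine le_trans (dni_le_abs _ (k - kk)) ?_
    have e3 : t3 - x' * n - ((k - kk : ℤ) : ℝ) = n * (p - x') := by
      push_cast; linear_combination -hnp - hkk
    rw [e3]
    exact hd3
  -- conclude
  have hbdd : BddBelow (Set.range fun y : ℝ =>
      max (dni (t1 - y * a)) (max (dni (t2 - y * b)) (dni (t3 - y * n)))) := by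
    refine ⟨0, ?_⟩
    rintro v ⟨y, rfl⟩
    exact le_max_of_le_left (dni_nonneg _)
  calc mu3 a b n t1 t2 t3
      ≤ max (dni (t1 - x' * a)) (max (dni (t2 - x' * b)) (dni (t3 - x' * n))) := by
        unfold mu3; exact ciInf_le hbdd x'
    _ ≤ E := max_le c1 (max_le c2 c3)
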